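/- Let m ≥ 1 be an integer and μ > 0 a real number. For every real ξ with −√μ ≤ ξ ≤ √μ, one has (∑_{k=0}^{m−1} ((2m−1)·(m−1+k)! / ((m−1−k)!·(2k+1)!)) · (−√μ/2)^{m−1−k} · (ξ+√μ)^k) · √(ξ+√μ) = ((−1)^{m−1} · μ^{(2m−1)/4} / 2^{m−3/2}) · sin( ((2m−1)/2) · arccos(−ξ/√μ) ). -/

import Mathlib

/-- The coefficients of the disk amplitude polynomial. -/
noncomputable def cDT (n k : ℕ) : ℝ :=
  (2 * (n : ℝ) + 1) * (Nat.factorial (n + k)) /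
    ((Nat.factorial (n - k)) * (Nat.factorial (2 * k + 1)))

lemma cDT_zero (n : ℕ) : cDT n 0 = 2 * (n : ℝ) + 1 := by
  have h : ((Nat.factorial n : ℝ)) ≠ 0 := Nat.cast_ne_zero.mpr n.factorial_ne_zero
  simp [cDT, Nat.factorial_one]
  field_simp

lemma cDT_self (n : ℕ) : cDT n n = 1 := by
  unfold cDT
  rw [show n + n = 2 * n from by omega, show n - n = 0 from by omega]
  rw [show 2 * n + 1 = (2*n) + 1 from rfl, Nat.factorial_succ]
  have h : ((Nat.factorial (2*n) : ℝ)) ≠ 0 := Nat.cast_ne_zero.mpr (2*n).factorial_ne_zero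
  push_cast
  field_simp
  simp

lemma cDT_succ (n : ℕ) : cDT (n+1) n = 2 * (n : ℝ) + 3 := by
  unfold cDT
  rw [show n + 1 + n = 2 * n + 1 from by omega, show n + 1 - n = 1 from by omega]
  have h : ((Nat.factorial (2*n+1) : ℝ)) ≠ 0 := Nat.cast_ne_zero.mpr (2*n+1).factorial_ne_zero
  simp [Nat.factorial_one]
  field_simp
  ring

lemma cDT_rec (j t : ℕ) :
    cDT (j+t+3) (j+1) = 2 * cDT (j+t+2) (j+1) + cDT (j+t+2) j - cDT (j+t+1) (j+1) := by
  unfold cDT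
  rw [show j+t+3 + (j+1) = 2*j+t+4 from by omega,
      show j+t+3 - (j+1) = t+2 from by omega,
      show j+t+2 + (j+1) = 2*j+t+3 from by omega,
      show j+t+2 - (j+1) = t+1 from by omega,
      show j+t+2 + j = 2*j+t+2 from by omega,
      show j+t+2 - j = t+2 from by omega,
      show j+t+1 + (j+1) = 2*j+t+2 from by omega,
      show j+t+1 - (j+1) = t from by omega,
      show 2*(j+1)+1 = 2*j+3 from by omega]
  have e1 : ((Nat.factorial (2*j+t+4) : ℝ))
      = ((2*j+t+4 : ℕ) : ℝ) * ((2*j+t+3 : ℕ) : ℝ) * (Nat.factorial (2*j+t+2) : ℝ) := by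
    rw [show 2*j+t+4 = ((2*j+t+2)+1)+1 from by omega, Nat.factorial_succ, Nat.factorial_succ]
    push_cast; ring
  have e2 : ((Nat.factorial (2*j+t+3) : ℝ))
      = ((2*j+t+3 : ℕ) : ℝ) * (Nat.factorial (2*j+t+2) : ℝ) := by
    rw [show 2*j+t+3 = (2*j+t+2)+1 from by omega, Nat.factorial_succ]
    push_cast; ring
  have e3 : ((Nat.factorial (t+2) : ℝ))
      = ((t+2 : ℕ) : ℝ) * ((t+1 : ℕ) : ℝ) * (Nat.factorial t : ℝ) := by
    rw [show t+2 = (t+1)+1 from by omega, Nat.factorial_succ, Nat.factorial_succ]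
    push_cast; ring
  have e4 : ((Nat.factorial (t+1) : ℝ)) = ((t+1 : ℕ) : ℝ) * (Nat.factorial t : ℝ) := by
    rw [Nat.factorial_succ]; push_cast; ring
  have e5 : ((Nat.factorial (2*j+3) : ℝ))
      = ((2*j+3 : ℕ) : ℝ) * ((2*j+2 : ℕ) : ℝ) * (Nat.factorial (2*j+1) : ℝ) := by
    rw [show 2*j+3 = ((2*j+1)+1)+1 from by omega, Nat.factorial_succ, Nat.factorial_succ]
    push_cast; ring
  rw [e1, e2, e3, e4, e5]
  have hA : ((Nat.factorial (2*j+t+2) : ℝ)) ≠ 0 := Nat.cast_ne_zero.mpr (Nat.factorial_ne_zero _)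
  have hB : ((Nat.factorial t : ℝ)) ≠ 0 := Nat.cast_ne_zero.mpr (Nat.factorial_ne_zero _)
  have hC : ((Nat.factorial (2*j+1) : ℝ)) ≠ 0 := Nat.cast_ne_zero.mpr (Nat.factorial_ne_zero _)
  have ht1 : ((t:ℝ)+1) ≠ 0 := by positivity
  have ht2 : ((t:ℝ)+2) ≠ 0 := by positivity
  have hj2 : (2*(j:ℝ)+2) ≠ 0 := by positivity
  have hj3 : (2*(j:ℝ)+3) ≠ 0 := by positivity
  push_cast
  field_simp
  ring

/-- The disk amplitude polynomial. -/
noncomputable def PDT (n : ℕ) (s : ℝ) : ℝ :=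
  ∑ k ∈ Finset.range (n+1), (-1 : ℝ)^k * cDT n k * 4^k * s^(2*k+1)

lemma PDT_rec (n : ℕ) (s : ℝ) : PDT (n+2) s = (2 - 4*s^2) * PDT (n+1) s - PDT n s := by
  unfold PDT
  have hshift :
      (∑ k ∈ Finset.range (n+3),
        (if k = 0 then 0 else (-1 : ℝ)^k * (4 * cDT (n+1) (k-1)) * 4^(k-1) * s^(2*k+1)))
      = ∑ k ∈ Finset.range (n+2), (-(1 : ℝ)) * ((-1 : ℝ)^k * cDT (n+1) k * 4^k * s^(2*k+1)) * (4 * s^2) := by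
    rw [Finset.sum_range_succ' _ (n+2)]
    simp only [if_neg (Nat.succ_ne_zero _), if_pos rfl, if_true, Nat.add_sub_cancel, add_zero]
    apply Finset.sum_congr rfl
    intro k _
    rw [pow_succ (-1 : ℝ) k]
    ring_nf
  have hpad1 :
      (∑ k ∈ Finset.range (n+3),
        (if k ≤ n+1 then 2 * ((-1 : ℝ)^k * cDT (n+1) k * 4^k * s^(2*k+1)) else 0))
      = ∑ k ∈ Finset.range (n+2), 2 * ((-1 : ℝ)^k * cDT (n+1) k * 4^k * s^(2*k+1)) := by
    rw [← Finset.sum_subset (Finset.range_subset_range.mpr (by omega : n+2 ≤ n+3))]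
    · apply Finset.sum_congr rfl
      intro k hk
      rw [if_pos (by simpa using Nat.lt_succ_iff.mp (Finset.mem_range.mp hk))]
    · intro k _ hk
      rw [if_neg (by simp at hk ⊢; omega)]
  have hpad2 :
      (∑ k ∈ Finset.range (n+3),
        (if k ≤ n then (-1 : ℝ)^k * cDT n k * 4^k * s^(2*k+1) else 0))
      = ∑ k ∈ Finset.range (n+1), (-1 : ℝ)^k * cDT n k * 4^k * s^(2*k+1) := by
    rw [← Finset.sum_subset (Finset.range_subset_range.mpr (by omega : n+1 ≤ n+3))]
    · apply Finset.sum_congr rfl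
      intro k hk
      rw [if_pos (by simpa using Nat.lt_succ_iff.mp (Finset.mem_range.mp hk))]
    · intro k _ hk
      rw [if_neg (by simp at hk ⊢; omega)]
  have expand : (2 - 4*s^2) * (∑ k ∈ Finset.range (n+2), (-1 : ℝ)^k * cDT (n+1) k * 4^k * s^(2*k+1))
      - ∑ k ∈ Finset.range (n+1), (-1 : ℝ)^k * cDT n k * 4^k * s^(2*k+1)
      = ∑ k ∈ Finset.range (n+3),
          ((if k ≤ n+1 then 2 * ((-1 : ℝ)^k * cDT (n+1) k * 4^k * s^(2*k+1)) else 0)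
           + (if k = 0 then 0 else (-1 : ℝ)^k * (4 * cDT (n+1) (k-1)) * 4^(k-1) * s^(2*k+1))
           - (if k ≤ n then (-1 : ℝ)^k * cDT n k * 4^k * s^(2*k+1) else 0)) := by
    rw [Finset.sum_sub_distrib, Finset.sum_add_distrib, hshift, hpad1, hpad2,
        Finset.mul_sum, ← Finset.sum_add_distrib]
    congr 1
    apply Finset.sum_congr rfl
    intro k _
    ring
  rw [expand]
  apply Finset.sum_congr rfl
  intro k hk
  have hk3 : k < n + 3 := Finset.mem_range.mp hk
  rcases Nat.eq_zero_or_pos k with hk0 | hkpos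
  · subst hk0
    rw [if_pos (by omega : 0 ≤ n+1), if_pos rfl, if_pos (by omega : 0 ≤ n)]
    rw [cDT_zero, cDT_zero, cDT_zero]
    push_cast
    ring
  · obtain ⟨j, rfl⟩ : ∃ j, k = j + 1 := ⟨k - 1, by omega⟩
    rw [if_neg (Nat.succ_ne_zero j), Nat.add_sub_cancel]
    rcases Nat.lt_or_ge (j+1) (n+1) with hlt | hge
    · rw [if_pos (by omega), if_pos (by omega)]
      obtain ⟨t, ht⟩ : ∃ t, n = j + t + 1 := ⟨n - j - 1, by omega⟩
      subst ht
      rw [show j+t+1+2 = j+t+3 from by omega, show j+t+1+1 = j+t+2 from by omega, cDT_rec j t]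
      ring
    · rcases Nat.lt_or_ge (j+1) (n+2) with hlt2 | hge2
      · have hj : j = n := by omega
        rw [hj, if_pos (by omega), if_neg (by omega),
            show n+2 = (n+1)+1 from rfl, cDT_succ (n+1), cDT_self (n+1), cDT_succ n]
        push_cast
        ring
      · have hj : j = n + 1 := by omega
        rw [hj, if_neg (by omega), if_neg (by omega),
            show n+1+1 = n+2 from rfl, cDT_self (n+2), cDT_self (n+1)]
        ring

lemma sin_odd_mul (n : ℕ) : ∀ x : ℝ, Real.sin ((2*(n:ℝ)+1) * x) = PDT n (Real.sin x) := by
  induction n using Nat.strong_induction_on with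
  | _ n ih =>
    match n with
    | 0 =>
      intro x
      have : cDT 0 0 = 1 := by simp [cDT]
      simp [PDT, this]
    | 1 =>
      intro x
      have h0 : cDT 1 0 = 3 := by norm_num [cDT, Nat.factorial]
      have h1 : cDT 1 1 = 1 := by norm_num [cDT, Nat.factorial]
      rw [PDT]
      simp only [Finset.sum_range_succ, Finset.sum_range_one, h0, h1]
      norm_num
      rw [Real.sin_three_mul]
      ring
    | (n+2) =>
      intro x
      have ih1 := ih (n+1) (by omega) x
      have ih0 := ih n (by omega) x
      have hadd := Real.sin_add ((2*(n:ℝ)+3) * x) (2*x)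
      have hsub := Real.sin_sub ((2*(n:ℝ)+3) * x) (2*x)
      have hcos2 : Real.cos (2*x) = 1 - 2 * Real.sin x ^ 2 := by
        rw [Real.cos_two_mul, ← Real.sin_sq_add_cos_sq x]; ring
      have e1 : (2*((n:ℝ)+2)+1) * x = (2*(n:ℝ)+3) * x + 2*x := by ring
      have e2 : (2*(n:ℝ)+1) * x = (2*(n:ℝ)+3) * x - 2*x := by ring
      have ih1' : Real.sin ((2*(n:ℝ)+3) * x) = PDT (n+1) (Real.sin x) := by
        rw [← ih1]; congr 1; push_cast; ring
      rw [e2] at ih0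
      have egoal : (2*((n+2:ℕ):ℝ)+1) * x = (2*(n:ℝ)+3) * x + 2*x := by push_cast; ring
      rw [egoal, hadd, PDT_rec]
      rw [hcos2] at hsub
      rw [hcos2]
      linear_combination hsub - ih0 + (2 - 4*Real.sin x ^ 2) * ih1'

/-- Closed form of the genus-zero disk amplitude of the m-th multicritical DT model
at the conformal background (Proposition 2). -/
theorem multicritical_DT_disk_amplitude_closed_form
    (m : ℕ) (hm : 1 ≤ m) (μ : ℝ) (hμ : 0 < μ) (ξ : ℝ)
    (hξ₁ : -Real.sqrt μ ≤ ξ) (hξ₂ : ξ ≤ Real.sqrt μ) :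
    (∑ k ∈ Finset.range m,
        ((2 * (m : ℝ) - 1) * (Nat.factorial (m - 1 + k)) /
            ((Nat.factorial (m - 1 - k)) * (Nat.factorial (2 * k + 1))))
          * (-(Real.sqrt μ) / 2) ^ (m - 1 - k) * (ξ + Real.sqrt μ) ^ k)
        * Real.sqrt (ξ + Real.sqrt μ)
      = ((-1 : ℝ) ^ (m - 1) * μ ^ ((2 * (m : ℝ) - 1) / 4) / (2 : ℝ) ^ ((m : ℝ) - 3 / 2))
          * Real.sin (((2 * (m : ℝ) - 1) / 2) * Real.arccos (-ξ / Real.sqrt μ)) := by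
  obtain ⟨n, rfl⟩ : ∃ n, m = n + 1 := ⟨m - 1, by omega⟩
  set r := Real.sqrt μ with hrdef
  have hrpos : 0 < r := Real.sqrt_pos.mpr hμ
  have hc1 : -1 ≤ -ξ / r := by
    rw [le_div_iff₀ hrpos]
    linarith
  have hc2 : -ξ / r ≤ 1 := (div_le_one hrpos).mpr (by linarith)
  set θ := Real.arccos (-ξ / r) with hθdef
  have hθ0 : 0 ≤ θ := Real.arccos_nonneg _
  have hθπ : θ ≤ Real.pi := Real.arccos_le_pi _
  have hcosθ : Real.cos θ = -ξ / r := Real.cos_arccos hc1 hc2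
  set s := Real.sin (θ/2) with hsdef
  have hs0 : 0 ≤ s := Real.sin_nonneg_of_nonneg_of_le_pi (by linarith)
    (by linarith [Real.pi_pos])
  have hsq : s^2 = (1 - Real.cos θ) / 2 := by
    have h1 := Real.cos_two_mul (θ/2)
    have h2 := Real.sin_sq_add_cos_sq (θ/2)
    rw [show 2 * (θ/2) = θ from by ring] at h1
    rw [hsdef]
    nlinarith
  have hxir : ξ + r = 2*r*s^2 := by
    rw [hsq, hcosθ]
    field_simp
    ring
  have hsqrt : Real.sqrt (ξ + r) = Real.sqrt 2 * Real.sqrt r * s := by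
    rw [hxir, show 2*r*s^2 = (2*r)*s^2 from by ring,
        Real.sqrt_mul (by positivity) (s^2), Real.sqrt_sq hs0,
        Real.sqrt_mul (by norm_num : (0:ℝ) ≤ 2) r]
  have hr_rpow : r = μ ^ ((1:ℝ)/2) := Real.sqrt_eq_rpow μ
  have hrn : r ^ n = μ ^ ((n:ℝ)/2) := by
    rw [hr_rpow, ← Real.rpow_natCast (μ ^ ((1:ℝ)/2)) n, ← Real.rpow_mul hμ.le]
    congr 1
    ring
  have hsr : Real.sqrt r = μ ^ ((1:ℝ)/4) := by
    rw [Real.sqrt_eq_rpow r, hr_rpow, ← Real.rpow_mul hμ.le]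
    norm_num
  have hmu_pow : μ ^ ((2 * ((n+1:ℕ) : ℝ) - 1) / 4) = r ^ n * Real.sqrt r := by
    rw [hrn, hsr, ← Real.rpow_add hμ]
    congr 1
    push_cast
    ring
  have h2pow : (2:ℝ) ^ (((n+1:ℕ) : ℝ) - 3/2) = 2 ^ n / Real.sqrt 2 := by
    rw [show (((n+1:ℕ) : ℝ) - 3/2) = (n:ℝ) + (-(1/2)) from by push_cast; ring,
        Real.rpow_add (by norm_num : (0:ℝ) < 2), Real.rpow_natCast,
        Real.rpow_neg (by norm_num : (0:ℝ) ≤ 2), ← Real.sqrt_eq_rpow]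
    ring
  have hsin : Real.sin ((2 * ((n+1:ℕ) : ℝ) - 1) / 2 * θ) = PDT n s := by
    rw [← sin_odd_mul n (θ/2)]
    congr 1
    push_cast
    ring
  simp only [Nat.add_sub_cancel]
  rw [hsqrt, hmu_pow, h2pow, hsin]
  have hfac : ∀ k : ℕ, ((Nat.factorial k : ℝ)) ≠ 0 :=
    fun k => Nat.cast_ne_zero.mpr k.factorial_ne_zero
  rw [PDT, Finset.mul_sum, Finset.sum_mul]
  apply Finset.sum_congr rfl
  intro k hk
  have hkn : k ≤ n := by
    have := Finset.mem_range.mp hk; omega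
  obtain ⟨j, rfl⟩ : ∃ j, n = k + j := ⟨n - k, by omega⟩
  rw [show k + j - k = j from by omega, hxir]
  unfold cDT
  rw [show k + j + k = 2*k + j from by omega, show k + j - k = j from by omega]
  have h2j : ((2:ℝ)) ^ j ≠ 0 := by positivity
  have h2kj : ((2:ℝ)) ^ (k+j) ≠ 0 := by positivity
  have hsq2 : Real.sqrt 2 ≠ 0 := by positivity
  have hsgn : ((-1:ℝ))^(k+j) * (-1)^k = (-1)^j := by
    rw [← pow_add, show (k+j)+k = 2*k+j from by omega, pow_add, pow_mul]
    norm_num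
  have h4 : ((4:ℝ))^k = 2^k * 2^k := by rw [← mul_pow]; norm_num
  have hm1 : ((-1:ℝ))^(k*2) = 1 := by rw [mul_comm, pow_mul]; norm_num
  push_cast
  field_simp
  rw [neg_pow, h4]
  have h2 : (2:ℝ)^j * (2⁻¹)^j = 1 := by rw [← mul_pow]; norm_num
  rw [div_pow, div_eq_mul_inv (r^j), ← inv_pow, mul_pow, mul_pow, ← pow_mul, pow_add (2:ℝ) k j, pow_add r k j]
  linear_combination (-((2 * ((k:ℝ) + j) + 1) * r^k * r^j * (2^k*2^k) * s^(2*k+1))) * hsgn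
    + ((2 * ((k:ℝ) + j) + 1) * (-1)^j * r^j * s * 2^k * r^k * s^(2*k) * 2^k) * h2
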